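/- Let H = (H, m, u, Δ, ε, T) be a weak Hopf algebra over a field k whose weak antipode T is an invertible anti-bialgebra morphism, so that H^op = (H, m^op, u, Δ, ε) is a weak Hopf algebra with weak antipode T^{-1}. Then H is perfect with respect to T if and only if H^op is perfect with respect to T^{-1}. -/
import Mathlib


noncomputable section

open TensorProduct

/-- The data of a (weak) bialgebra on a `k`-vector space `H`:
multiplication, unit, comultiplication and counit, all as linear maps. -/
structure BialgData (k : Type) [Field k] (H : Type) [AddCommGroup H] [Module k H] where
  mul : H ⊗[k] H →ₗ[k] H
  one : H
  comul : H →ₗ[k] H ⊗[k] H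
  counit : H →ₗ[k] k

namespace BialgData

variable {k : Type} [Field k] {H : Type} [AddCommGroup H] [Module k H]

/-- The axioms making `BialgData` an honest bialgebra. -/
structure IsBialgebra (B : BialgData k H) : Prop where
  mul_assoc : ∀ x y z : H, B.mul (B.mul (x ⊗ₜ y) ⊗ₜ z) = B.mul (x ⊗ₜ B.mul (y ⊗ₜ z))
  one_mul : ∀ x : H, B.mul (B.one ⊗ₜ x) = x
  mul_one : ∀ x : H, B.mul (x ⊗ₜ B.one) = x
  coassoc : ∀ x : H,
    (TensorProduct.assoc k H H H) ((TensorProduct.map B.comul LinearMap.id) (B.comul x))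
      = (TensorProduct.map LinearMap.id B.comul) (B.comul x)
  counit_comul : ∀ x : H,
    (TensorProduct.lid k H) ((TensorProduct.map B.counit LinearMap.id) (B.comul x)) = x
  comul_counit : ∀ x : H,
    (TensorProduct.rid k H) ((TensorProduct.map LinearMap.id B.counit) (B.comul x)) = x
  comul_mul : ∀ x y : H,
    B.comul (B.mul (x ⊗ₜ y)) =
      (TensorProduct.map B.mul B.mul)
        ((TensorProduct.tensorTensorTensorComm k H H H H) (B.comul x ⊗ₜ B.comul y))
  comul_one : B.comul B.one = B.one ⊗ₜ B.one
  counit_mul : ∀ x y : H, B.counit (B.mul (x ⊗ₜ y)) = B.counit x * B.counit y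
  counit_one : B.counit B.one = 1

/-- Convolution product of linear endomorphisms: `f ∗ g = mul ∘ (f ⊗ g) ∘ comul`. -/
def conv (B : BialgData k H) (f g : H →ₗ[k] H) : H →ₗ[k] H :=
  B.mul ∘ₗ TensorProduct.map f g ∘ₗ B.comul

/-- `T` is a weak antipode: `id ∗ T ∗ id = id` and `T ∗ id ∗ T = T`. -/
def IsWeakAntipode (B : BialgData k H) (T : H →ₗ[k] H) : Prop :=
  B.conv (B.conv LinearMap.id T) LinearMap.id = LinearMap.id ∧
    B.conv (B.conv T LinearMap.id) T = T

/-- `T` is an anti-bialgebra morphism: `T(xy) = T(y)T(x)`, `T(1) = 1`,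
`Δ(T x) = Σ T(x'') ⊗ T(x')` and `ε ∘ T = ε`. -/
def IsAntiBialgebraHom (B : BialgData k H) (T : H →ₗ[k] H) : Prop :=
  (∀ x y : H, T (B.mul (x ⊗ₜ y)) = B.mul (T y ⊗ₜ T x)) ∧
  T B.one = B.one ∧
  (∀ x : H, B.comul (T x) =
    (TensorProduct.comm k H H) ((TensorProduct.map T T) (B.comul x))) ∧
  ∀ x : H, B.counit (T x) = B.counit x

/-- `H` is perfect: `T` is an anti-bialgebra morphism and `(id ∗ T)(H) ⊆ C(H)`,
i.e. `Σ x'T(x'')` is central for every `x`. -/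
def Perfect (B : BialgData k H) (T : H →ₗ[k] H) : Prop :=
  B.IsAntiBialgebraHom T ∧
    ∀ x y : H,
      B.mul ((B.conv LinearMap.id T) x ⊗ₜ y) = B.mul (y ⊗ₜ (B.conv LinearMap.id T) x)

/-- `H` is coperfect: `T` is an anti-bialgebra morphism and
`Σ x'T(x'') ⊗ x''' = Σ x''T(x''') ⊗ x'` for every `x`. -/
def Coperfect (B : BialgData k H) (T : H →ₗ[k] H) : Prop :=
  B.IsAntiBialgebraHom T ∧
    ∀ x : H,
      (TensorProduct.map (B.conv LinearMap.id T) LinearMap.id) (B.comul x)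
        = (TensorProduct.comm k H H)
            ((TensorProduct.map LinearMap.id (B.conv LinearMap.id T)) (B.comul x))

/-- `H` is biperfect: perfect and coperfect. -/
def Biperfect (B : BialgData k H) (T : H →ₗ[k] H) : Prop :=
  B.Perfect T ∧ B.Coperfect T

/-- The opposite bialgebra `H^op`: same coalgebra, opposite multiplication. -/
def op (B : BialgData k H) : BialgData k H :=
  { B with mul := B.mul ∘ₗ (TensorProduct.comm k H H).toLinearMap }

/-- The co-opposite bialgebra `H^cop`: same algebra, opposite comultiplication. -/
def cop (B : BialgData k H) : BialgData k H :=
  { B with comul := (TensorProduct.comm k H H).toLinearMap ∘ₗ B.comul }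

/-- `H` is commutative. -/
def Commutative (B : BialgData k H) : Prop :=
  ∀ x y : H, B.mul (x ⊗ₜ y) = B.mul (y ⊗ₜ x)

/-- `H` is cocommutative. -/
def Cocommutative (B : BialgData k H) : Prop :=
  ∀ x : H, (TensorProduct.comm k H H) (B.comul x) = B.comul x

/-- The dual weak Hopf algebra structure on `H* = Module.Dual k H` (for `H` finite
dimensional): convolution multiplication `(fg)(x) = Σ f(x')g(x'')`, unit `ε`,
comultiplication dual to the multiplication of `H`, counit `f ↦ f 1`. -/
def dual (B : BialgData k H) [FiniteDimensional k H] :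
    BialgData k (Module.Dual k H) where
  mul := B.comul.dualMap ∘ₗ TensorProduct.dualDistrib k H H
  one := B.counit
  comul := ((TensorProduct.dualDistribEquiv k H H).symm :
      Module.Dual k (H ⊗[k] H) →ₗ[k] Module.Dual k H ⊗[k] Module.Dual k H) ∘ₗ
    B.mul.dualMap
  counit := Module.Dual.eval k H B.one

section Reshuffle

variable (k)
variable (M N P : Type) [AddCommGroup M] [AddCommGroup N] [AddCommGroup P]
  [Module k M] [Module k N] [Module k P]

/-- `(u ⊗ v) ⊗ w ↦ (u ⊗ w) ⊗ v`. -/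
def swap23 : (M ⊗[k] N) ⊗[k] P →ₗ[k] (M ⊗[k] P) ⊗[k] N :=
  ((TensorProduct.assoc k M P N).symm : M ⊗[k] (P ⊗[k] N) →ₗ[k] (M ⊗[k] P) ⊗[k] N) ∘ₗ
    (TensorProduct.map LinearMap.id ((TensorProduct.comm k N P) : N ⊗[k] P →ₗ[k] P ⊗[k] N)) ∘ₗ
      ((TensorProduct.assoc k M N P) : (M ⊗[k] N) ⊗[k] P →ₗ[k] M ⊗[k] (N ⊗[k] P))

/-- `(u ⊗ v) ⊗ w ↦ (w ⊗ u) ⊗ v`. -/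
def rot3 : (M ⊗[k] N) ⊗[k] P →ₗ[k] (P ⊗[k] M) ⊗[k] N :=
  ((TensorProduct.assoc k P M N).symm : P ⊗[k] (M ⊗[k] N) →ₗ[k] (P ⊗[k] M) ⊗[k] N) ∘ₗ
    ((TensorProduct.comm k (M ⊗[k] N) P) : (M ⊗[k] N) ⊗[k] P →ₗ[k] P ⊗[k] (M ⊗[k] N))

end Reshuffle

/-- The iterated comultiplication `x ↦ (x' ⊗ x'') ⊗ x'''`. -/
def comul2 (B : BialgData k H) : H →ₗ[k] (H ⊗[k] H) ⊗[k] H :=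
  (TensorProduct.map B.comul LinearMap.id) ∘ₗ B.comul

/-- The convolution multiplication on `H*`: `(fg)(x) = Σ f(x') g(x'')`. -/
def dualMul (B : BialgData k H) :
    Module.Dual k H ⊗[k] Module.Dual k H →ₗ[k] Module.Dual k H :=
  B.comul.dualMap ∘ₗ TensorProduct.dualDistrib k H H

/-- The comultiplication on `H*` dual to the multiplication of `H`. -/
def dualComul (B : BialgData k H) [FiniteDimensional k H] :
    Module.Dual k H →ₗ[k] Module.Dual k H ⊗[k] Module.Dual k H :=
  ((TensorProduct.dualDistribEquiv k H H).symm :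
      Module.Dual k (H ⊗[k] H) →ₗ[k] Module.Dual k H ⊗[k] Module.Dual k H) ∘ₗ
    B.mul.dualMap

/-- `u ⊗ v ↦ (x ↦ T⁻¹(u) · x · v)`, where `Tinv = T⁻¹`. -/
def conjLin (B : BialgData k H) (Tinv : H →ₗ[k] H) : H ⊗[k] H →ₗ[k] (H →ₗ[k] H) :=
  TensorProduct.lift
    ((((LinearMap.llcomp k H H H) ∘ₗ (TensorProduct.curry B.mul).flip).compl₂
        ((TensorProduct.curry B.mul) ∘ₗ Tinv)).flip)

/-- `g ⊗ (u ⊗ v) ↦ g(T⁻¹(u) · ? · v)`. -/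
def dualConj (B : BialgData k H) (Tinv : H →ₗ[k] H) :
    Module.Dual k H ⊗[k] (H ⊗[k] H) →ₗ[k] Module.Dual k H :=
  (TensorProduct.lift (LinearMap.llcomp k H H k)) ∘ₗ
    (TensorProduct.map LinearMap.id (B.conjLin Tinv))

/-- `a ↦ (a''' ⊗ a') ⊗ a''`. -/
def comul2rot (B : BialgData k H) : H →ₗ[k] (H ⊗[k] H) ⊗[k] H :=
  (BialgData.rot3 k H H H) ∘ₗ B.comul2

/-- The multiplication of the quantum double `D(H) = H^{*cop} ∞ H`:
`(f ∞ a)(g ∞ b) = Σ f · g(T⁻¹(a''') ? a') ∞ a'' b`. -/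
def doubleMul (B : BialgData k H) (Tinv : H →ₗ[k] H) :
    (Module.Dual k H ⊗[k] H) ⊗[k] (Module.Dual k H ⊗[k] H) →ₗ[k]
      Module.Dual k H ⊗[k] H :=
  (TensorProduct.map (B.dualMul) B.mul) ∘ₗ
  (TensorProduct.map ((TensorProduct.comm k (Module.Dual k H) (Module.Dual k H)) :
      Module.Dual k H ⊗[k] Module.Dual k H →ₗ[k] Module.Dual k H ⊗[k] Module.Dual k H)
    (LinearMap.id : H ⊗[k] H →ₗ[k] H ⊗[k] H)) ∘ₗ
  ((TensorProduct.tensorTensorTensorComm k (Module.Dual k H) H (Module.Dual k H) H) :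
    (Module.Dual k H ⊗[k] H) ⊗[k] (Module.Dual k H ⊗[k] H) →ₗ[k]
      (Module.Dual k H ⊗[k] Module.Dual k H) ⊗[k] (H ⊗[k] H)) ∘ₗ
  (TensorProduct.map
    ((TensorProduct.map (B.dualConj Tinv) LinearMap.id) ∘ₗ
      ((TensorProduct.assoc k (Module.Dual k H) (H ⊗[k] H) H).symm :
        Module.Dual k H ⊗[k] ((H ⊗[k] H) ⊗[k] H) →ₗ[k]
          (Module.Dual k H ⊗[k] (H ⊗[k] H)) ⊗[k] H))
    (LinearMap.id : Module.Dual k H ⊗[k] H →ₗ[k] Module.Dual k H ⊗[k] H)) ∘ₗ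
  ((TensorProduct.tensorTensorTensorComm k (Module.Dual k H) (Module.Dual k H)
      ((H ⊗[k] H) ⊗[k] H) H) :
    (Module.Dual k H ⊗[k] Module.Dual k H) ⊗[k] (((H ⊗[k] H) ⊗[k] H) ⊗[k] H) →ₗ[k]
      (Module.Dual k H ⊗[k] ((H ⊗[k] H) ⊗[k] H)) ⊗[k] (Module.Dual k H ⊗[k] H)) ∘ₗ
  (TensorProduct.map (LinearMap.id : Module.Dual k H ⊗[k] Module.Dual k H →ₗ[k]
      Module.Dual k H ⊗[k] Module.Dual k H)
    (TensorProduct.map B.comul2rot (LinearMap.id : H →ₗ[k] H))) ∘ₗ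
  (TensorProduct.map ((TensorProduct.comm k (Module.Dual k H) (Module.Dual k H)) :
      Module.Dual k H ⊗[k] Module.Dual k H →ₗ[k] Module.Dual k H ⊗[k] Module.Dual k H)
    (LinearMap.id : H ⊗[k] H →ₗ[k] H ⊗[k] H)) ∘ₗ
  ((TensorProduct.tensorTensorTensorComm k (Module.Dual k H) H (Module.Dual k H) H) :
    (Module.Dual k H ⊗[k] H) ⊗[k] (Module.Dual k H ⊗[k] H) →ₗ[k]
      (Module.Dual k H ⊗[k] Module.Dual k H) ⊗[k] (H ⊗[k] H))

/-- The comultiplication of the quantum double `D(H) = H^{*cop} ∞ H`, using the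
coproduct of `H^{*cop}` on the first factor. -/
def doubleComul (B : BialgData k H) [FiniteDimensional k H] :
    Module.Dual k H ⊗[k] H →ₗ[k]
      (Module.Dual k H ⊗[k] H) ⊗[k] (Module.Dual k H ⊗[k] H) :=
  ((TensorProduct.tensorTensorTensorComm k (Module.Dual k H) (Module.Dual k H) H H) :
      (Module.Dual k H ⊗[k] Module.Dual k H) ⊗[k] (H ⊗[k] H) →ₗ[k]
        (Module.Dual k H ⊗[k] H) ⊗[k] (Module.Dual k H ⊗[k] H)) ∘ₗ
    (TensorProduct.map
      (((TensorProduct.comm k (Module.Dual k H) (Module.Dual k H)) :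
          Module.Dual k H ⊗[k] Module.Dual k H →ₗ[k]
            Module.Dual k H ⊗[k] Module.Dual k H) ∘ₗ B.dualComul)
      B.comul)

/-- The unit `ε ∞ 1` of the quantum double. -/
def doubleOne (B : BialgData k H) : Module.Dual k H ⊗[k] H :=
  B.counit ⊗ₜ B.one

/-- Componentwise multiplication on `D(H) ⊗ D(H)`. -/
def doubleMul2 (B : BialgData k H) (Tinv : H →ₗ[k] H) :
    ((Module.Dual k H ⊗[k] H) ⊗[k] (Module.Dual k H ⊗[k] H)) ⊗[k]
        ((Module.Dual k H ⊗[k] H) ⊗[k] (Module.Dual k H ⊗[k] H)) →ₗ[k]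
      (Module.Dual k H ⊗[k] H) ⊗[k] (Module.Dual k H ⊗[k] H) :=
  (TensorProduct.map (B.doubleMul Tinv) (B.doubleMul Tinv)) ∘ₗ
    ((TensorProduct.tensorTensorTensorComm k (Module.Dual k H ⊗[k] H)
        (Module.Dual k H ⊗[k] H) (Module.Dual k H ⊗[k] H) (Module.Dual k H ⊗[k] H)) :
      ((Module.Dual k H ⊗[k] H) ⊗[k] (Module.Dual k H ⊗[k] H)) ⊗[k]
          ((Module.Dual k H ⊗[k] H) ⊗[k] (Module.Dual k H ⊗[k] H)) →ₗ[k]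
        ((Module.Dual k H ⊗[k] H) ⊗[k] (Module.Dual k H ⊗[k] H)) ⊗[k]
          ((Module.Dual k H ⊗[k] H) ⊗[k] (Module.Dual k H ⊗[k] H)))

/-- Componentwise multiplication on `D(H) ⊗ D(H) ⊗ D(H)` (associated to the left). -/
def doubleMul3 (B : BialgData k H) (Tinv : H →ₗ[k] H) :
    (((Module.Dual k H ⊗[k] H) ⊗[k] (Module.Dual k H ⊗[k] H)) ⊗[k]
          (Module.Dual k H ⊗[k] H)) ⊗[k]
        (((Module.Dual k H ⊗[k] H) ⊗[k] (Module.Dual k H ⊗[k] H)) ⊗[k]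
          (Module.Dual k H ⊗[k] H)) →ₗ[k]
      ((Module.Dual k H ⊗[k] H) ⊗[k] (Module.Dual k H ⊗[k] H)) ⊗[k]
        (Module.Dual k H ⊗[k] H) :=
  (TensorProduct.map (B.doubleMul2 Tinv) (B.doubleMul Tinv)) ∘ₗ
    ((TensorProduct.tensorTensorTensorComm k
        ((Module.Dual k H ⊗[k] H) ⊗[k] (Module.Dual k H ⊗[k] H)) (Module.Dual k H ⊗[k] H)
        ((Module.Dual k H ⊗[k] H) ⊗[k] (Module.Dual k H ⊗[k] H)) (Module.Dual k H ⊗[k] H)) :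
      (((Module.Dual k H ⊗[k] H) ⊗[k] (Module.Dual k H ⊗[k] H)) ⊗[k]
            (Module.Dual k H ⊗[k] H)) ⊗[k]
          (((Module.Dual k H ⊗[k] H) ⊗[k] (Module.Dual k H ⊗[k] H)) ⊗[k]
            (Module.Dual k H ⊗[k] H)) →ₗ[k]
        (((Module.Dual k H ⊗[k] H) ⊗[k] (Module.Dual k H ⊗[k] H)) ⊗[k]
            ((Module.Dual k H ⊗[k] H) ⊗[k] (Module.Dual k H ⊗[k] H))) ⊗[k]
          ((Module.Dual k H ⊗[k] H) ⊗[k] (Module.Dual k H ⊗[k] H)))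

end BialgData

section Pairing

open BialgData

variable {k : Type} [Field k] {X A : Type}
  [AddCommGroup X] [Module k X] [AddCommGroup A] [Module k A]

/-- A weak Hopf pair `(X, A)`: a nondegenerate bilinear form `⟨·,·⟩ : X × A → k`
satisfying `⟨x, ab⟩ = Σ ⟨x', a⟩⟨x'', b⟩`, `⟨x, 1⟩ = ε(x)`,
`⟨xy, a⟩ = Σ ⟨x, a'⟩⟨y, a''⟩`, `⟨1, a⟩ = ε(a)` and `⟨S_X x, a⟩ = ⟨x, S_A a⟩`. -/
structure IsWeakHopfPair (BX : BialgData k X) (BA : BialgData k A)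
    (SX : X →ₗ[k] X) (SA : A →ₗ[k] A) (p : X →ₗ[k] A →ₗ[k] k) : Prop where
  nondegen_left : ∀ x : X, (∀ a : A, p x a = 0) → x = 0
  nondegen_right : ∀ a : A, (∀ x : X, p x a = 0) → a = 0
  pair_mul_right : ∀ (x : X) (a b : A),
    p x (BA.mul (a ⊗ₜ b)) =
      (TensorProduct.lid k k) ((TensorProduct.map (p.flip a) (p.flip b)) (BX.comul x))
  pair_one_right : ∀ x : X, p x BA.one = BX.counit x
  pair_mul_left : ∀ (x y : X) (a : A),
    p (BX.mul (x ⊗ₜ y)) a =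
      (TensorProduct.lid k k) ((TensorProduct.map (p x) (p y)) (BA.comul a))
  pair_one_left : ∀ a : A, p BX.one a = BA.counit a
  pair_antipode : ∀ (x : X) (a : A), p (SX x) a = p x (SA a)

/-- A weak Hopf skew-pair `(X, A)` (with `S_A` invertible, with inverse `SAinv`):
as a weak Hopf pair but with `⟨x, ab⟩ = Σ ⟨x'', a⟩⟨x', b⟩` and
`⟨S_X x, a⟩ = ⟨x, S_A⁻¹ a⟩`. -/
structure IsWeakHopfSkewPair (BX : BialgData k X) (BA : BialgData k A)
    (SX : X →ₗ[k] X) (SAinv : A →ₗ[k] A) (p : X →ₗ[k] A →ₗ[k] k) : Prop where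
  nondegen_left : ∀ x : X, (∀ a : A, p x a = 0) → x = 0
  nondegen_right : ∀ a : A, (∀ x : X, p x a = 0) → a = 0
  pair_mul_right : ∀ (x : X) (a b : A),
    p x (BA.mul (a ⊗ₜ b)) =
      (TensorProduct.lid k k) ((TensorProduct.map (p.flip b) (p.flip a)) (BX.comul x))
  pair_one_right : ∀ x : X, p x BA.one = BX.counit x
  pair_mul_left : ∀ (x y : X) (a : A),
    p (BX.mul (x ⊗ₜ y)) a =
      (TensorProduct.lid k k) ((TensorProduct.map (p x) (p y)) (BA.comul a))
  pair_one_left : ∀ a : A, p BX.one a = BA.counit a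
  pair_antipode : ∀ (x : X) (a : A), p (SX x) a = p x (SAinv a)

variable (BX : BialgData k X) (BA : BialgData k A)
  (SX : X →ₗ[k] X) (SAinv : A →ₗ[k] A) (p : X →ₗ[k] A →ₗ[k] k)

/-- Auxiliary map `x ↦ Σ ⟨x' · S_X(x'''), ·⟩ ⊗ x'' ∈ A* ⊗ X`. -/
def lactAux : X →ₗ[k] Module.Dual k A ⊗[k] X :=
  (TensorProduct.map (p ∘ₗ BX.mul ∘ₗ TensorProduct.map LinearMap.id SX) LinearMap.id) ∘ₗ
    (BialgData.swap23 k X X X) ∘ₗ BX.comul2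

/-- The left action `a ▷ x = Σ ⟨x' · S_X(x'''), a⟩ x''` of `A` on `X`,
as a linear map `A ⊗ X → X`. -/
def lact : A ⊗[k] X →ₗ[k] X :=
  ((TensorProduct.lid k X) : k ⊗[k] X →ₗ[k] X) ∘ₗ
    (TensorProduct.map (contractLeft k A) LinearMap.id) ∘ₗ
      (TensorProduct.map ((TensorProduct.comm k A (Module.Dual k A)) :
          A ⊗[k] Module.Dual k A →ₗ[k] Module.Dual k A ⊗[k] A) LinearMap.id) ∘ₗ
        ((TensorProduct.assoc k A (Module.Dual k A) X).symm :
          A ⊗[k] (Module.Dual k A ⊗[k] X) →ₗ[k] (A ⊗[k] Module.Dual k A) ⊗[k] X) ∘ₗ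
          (TensorProduct.map LinearMap.id (lactAux BX SX p))

/-- Auxiliary map `a ↦ Σ ⟨·, S_A⁻¹(a''') · a'⟩ ⊗ a'' ∈ X* ⊗ A`. -/
def ractAux : A →ₗ[k] Module.Dual k X ⊗[k] A :=
  (TensorProduct.map (p.flip ∘ₗ BA.mul ∘ₗ TensorProduct.map SAinv LinearMap.id)
      LinearMap.id) ∘ₗ
    (BialgData.rot3 k A A A) ∘ₗ BA.comul2

/-- The right action `a ◁ x = Σ ⟨x, S_A⁻¹(a''') a'⟩ a''` of `X` on `A`,
as a linear map `A ⊗ X → A`. -/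
def ract : A ⊗[k] X →ₗ[k] A :=
  ((TensorProduct.lid k A) : k ⊗[k] A →ₗ[k] A) ∘ₗ
    (TensorProduct.map (contractLeft k X) LinearMap.id) ∘ₗ
      (BialgData.swap23 k (Module.Dual k X) A X) ∘ₗ
        (TensorProduct.map (ractAux BA SAinv p) LinearMap.id)

end Pairing

/-- `H` is perfect with respect to `T` if and only if `H^op` is
perfect with respect to `T⁻¹`. -/
theorem perfect_iff_op_perfect
    {k : Type} [Field k] {H : Type} [AddCommGroup H] [Module k H]
    (B : BialgData k H) (T Tinv : H →ₗ[k] H)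
    (hB : B.IsBialgebra) (hT : B.IsWeakAntipode T)
    (hanti : B.IsAntiBialgebraHom T)
    (hinv₁ : Tinv ∘ₗ T = LinearMap.id) (hinv₂ : T ∘ₗ Tinv = LinearMap.id) :
    B.Perfect T ↔ B.op.Perfect Tinv := by
  have hTi : ∀ a, Tinv (T a) = a := fun a => by
    simpa using LinearMap.congr_fun hinv₁ a
  have hiT : ∀ a, T (Tinv a) = a := fun a => by
    simpa using LinearMap.congr_fun hinv₂ a
  have hopm : B.op.mul = B.mul ∘ₗ (TensorProduct.comm k H H).toLinearMap := rfl
  have hopc : B.op.comul = B.comul := rfl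
  have hopmul : ∀ a b : H, B.op.mul (a ⊗ₜ[k] b) = B.mul (b ⊗ₜ[k] a) := by
    intro a b
    rw [hopm]
    simp only [LinearMap.comp_apply, LinearEquiv.coe_coe, TensorProduct.comm_tmul]
  have hcomulTinv : ∀ x, B.comul (Tinv x)
      = (TensorProduct.comm k H H) ((TensorProduct.map Tinv Tinv) (B.comul x)) := by
    intro x
    have h := hanti.2.2.1 (Tinv x)
    rw [hiT x] at h
    rw [h]
    have key : ∀ u : H ⊗[k] H,
        (TensorProduct.comm k H H) ((TensorProduct.map Tinv Tinv)
          ((TensorProduct.comm k H H) ((TensorProduct.map T T) u))) = u := by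
      intro u
      induction u using TensorProduct.induction_on with
      | zero => simp
      | tmul a b => simp [hTi]
      | add a b ha hb => simp only [map_add, ha, hb]
    exact (key _).symm
  have hconv_op : ∀ x, (B.op.conv LinearMap.id Tinv) x = (B.conv LinearMap.id T) (Tinv x) := by
    intro x
    simp only [BialgData.conv, hopm, hopc, LinearMap.comp_apply]
    rw [hcomulTinv x]
    generalize B.comul x = u
    induction u using TensorProduct.induction_on with
    | zero => simp
    | tmul a b => simp [hiT]
    | add a b ha hb => simp only [map_add, ha, hb]
  have hconv_T : ∀ x, (B.conv LinearMap.id T) x = (B.op.conv LinearMap.id Tinv) (T x) := by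
    intro x
    simp only [BialgData.conv, hopm, hopc, LinearMap.comp_apply]
    rw [hanti.2.2.1 x]
    generalize B.comul x = u
    induction u using TensorProduct.induction_on with
    | zero => simp
    | tmul a b => simp [hTi]
    | add a b ha hb => simp only [map_add, ha, hb]
  constructor
  · rintro ⟨-, hc⟩
    refine ⟨⟨?_, ?_, ?_, ?_⟩, ?_⟩
    · intro x y
      rw [hopmul, hopmul]
      calc Tinv (B.mul (y ⊗ₜ[k] x))
          = Tinv (B.mul (T (Tinv y) ⊗ₜ[k] T (Tinv x))) := by rw [hiT, hiT]
        _ = Tinv (T (B.mul (Tinv x ⊗ₜ[k] Tinv y))) := by rw [hanti.1]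
        _ = B.mul (Tinv x ⊗ₜ[k] Tinv y) := hTi _
    · show Tinv B.one = B.one
      calc Tinv B.one = Tinv (T B.one) := by rw [hanti.2.1]
        _ = B.one := hTi _
    · exact hcomulTinv
    · intro x
      have h := hanti.2.2.2 (Tinv x)
      rw [hiT x] at h
      exact h.symm
    · intro x y
      rw [hconv_op x, hopmul, hopmul]
      exact (hc (Tinv x) y).symm
  · rintro ⟨-, hc⟩
    refine ⟨hanti, ?_⟩
    intro x y
    rw [hconv_T x]
    have h := hc (T x) y
    rw [hopmul, hopmul] at h
    exact h.symm
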